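/- Let d ≥ 1. In the distance-d AGP logical measurement procedure there are 2d error locations, indexed by pairs (j,k) with j ∈ {1,…,d} and k ∈ {0,1}, where both errors (j,0) (a data error before the j-th LM component) and (j,1) (a measurement error in the j-th LM component) flip exactly the j-th logical measurement outcome m_j. For an error vector e ∈ 𝔽₂^{2d}, define the flip vector f ∈ 𝔽₂^d by f(j) = e(j,0) + e(j,1). If e violates no detector, i.e. f(j) + f(j+1) = 0 for every j ∈ {1,…,d−1}, and e flips the observable, i.e. f(d) = 1, then the Hamming weight of e is at least d. That is, in the AGP procedure it takes at least d = 2t+1 errors to flip the observable without violating any detectors. -/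
import Mathlib


/-- In the distance-`d` AGP logical measurement procedure, any error vector
(on the `2d` error locations, where errors `(j,0)` and `(j,1)` both flip
exactly the `j`-th logical measurement outcome) that violates no detector and
flips the observable has Hamming weight at least `d`. -/
theorem agp_procedure_lower_bound {d : ℕ} (hd : 1 ≤ d)
    (e : Fin d × Fin 2 → ZMod 2)
    (hdet : ∀ i : ℕ, ∀ h : i + 1 < d,
      (e (⟨i, by omega⟩, 0) + e (⟨i, by omega⟩, 1)) +
        (e (⟨i + 1, h⟩, 0) + e (⟨i + 1, h⟩, 1)) = 0)
    (hobs : e (⟨d - 1, by omega⟩, 0) + e (⟨d - 1, by omega⟩, 1) = 1) :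
    d ≤ hammingNorm e := by
  -- every flip f i = 1
  have key : ∀ j : ℕ, j < d →
      e (⟨d - 1 - j, by omega⟩, 0) + e (⟨d - 1 - j, by omega⟩, 1) = 1 := by
    intro j
    induction j with
    | zero => intro _; simpa using hobs
    | succ n ih =>
      intro hn
      have hlt : (d - 1 - (n + 1)) + 1 < d := by omega
      have h1 := hdet (d - 1 - (n + 1)) hlt
      have h2 : d - 1 - (n + 1) + 1 = d - 1 - n := by omega
      have h3 := ih (by omega)
      rw [show (⟨d - 1 - (n+1) + 1, hlt⟩ : Fin d) = ⟨d - 1 - n, by omega⟩ by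
        exact Fin.ext h2] at h1
      rw [h3] at h1
      -- h1 : x + 1 = 0 in ZMod 2 → x = 1
      have : e (⟨d - 1 - (n+1), by omega⟩, 0) + e (⟨d - 1 - (n+1), by omega⟩, 1)
          = -1 := by linear_combination h1
      rw [this]; decide
  have key' : ∀ i : Fin d, e (i, 0) + e (i, 1) = 1 := by
    intro i
    have := key (d - 1 - i) (by omega)
    have hlt := i.isLt
    have h : (⟨d - 1 - (d - 1 - (i : ℕ)), by omega⟩ : Fin d) = i :=
      Fin.ext (by simp only [Fin.val_mk]; omega)
    rwa [h] at this
  -- build injection from Fin d into support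
  classical
  have hle := Finset.card_le_card_of_injOn
    (f := fun i : Fin d => if e (i, 0) ≠ 0 then (i, (0 : Fin 2)) else (i, 1))
    (s := Finset.univ) (t := Finset.univ.filter (fun x => e x ≠ 0))
    ?_ ?_
  case refine_3 => simpa [hammingNorm] using hle
  case refine_1 =>
    intro i _
    by_cases h : e (i, 0) ≠ 0
    · simp [h]
    · push_neg at h
      have h2 := key' i
      rw [h, zero_add] at h2
      simp [h, h2]
  case refine_2 =>
    intro a _ b _ hab
    simpa [apply_ite Prod.fst] using congrArg Prod.fst hab
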